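/- For every integer m ≥ 0 there exist a real constant c and a constant K' > 0 such that for all T ≥ 2 with T ∉ {x n : n ∈ ℕ}, | Σ_{n : x n < T} log^m(x n)/(x n) − A_m(T) − c | ≤ K'·log^{m+1}(T)/T; in particular the limit as T → ∞ of Σ_{n : x n < T} log^m(x n)/(x n) − A_m(T) exists and equals c. -/

import Mathlib

open MeasureTheory Set Filter

/-- The subtracted term `A_m(T) = (1/(2π(m+1)(m+2)))·log^{m+1}(T)·log(T^{m+1}/(2π)^{m+2})`. -/
noncomputable def ACoeff (m : ℕ) (T : ℝ) : ℝ :=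
  1 / (2 * Real.pi * (m + 1) * (m + 2)) * Real.log T ^ (m + 1) *
    Real.log (T ^ (m + 1) / (2 * Real.pi) ^ (m + 2))

noncomputable def auxF (m : ℕ) (t : ℝ) : ℝ := Real.log t ^ m / t

noncomputable def auxG (m : ℕ) (t : ℝ) : ℝ :=
  ((m : ℝ) * Real.log t ^ (m - 1) - Real.log t ^ m) / t ^ 2

noncomputable def auxL (t : ℝ) : ℝ :=
  7/8 + t / (2 * Real.pi) * Real.log (t / (2 * Real.pi)) - t / (2 * Real.pi)

noncomputable def auxB (m : ℕ) (t : ℝ) : ℝ := auxL t * auxF m t - ACoeff m t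

lemma aux_sum_id (k : ℕ) (L : ℝ) :
    ∑ j ∈ Finset.range (k+1), (k.factorial / j.factorial : ℝ) * (j * L ^ (j-1)) =
    (∑ j ∈ Finset.range (k+1), (k.factorial / j.factorial : ℝ) * L ^ j) - L ^ k := by
  rw [Finset.sum_range_succ' (fun j => (k.factorial / j.factorial : ℝ) * (j * L ^ (j-1)))]
  rw [Finset.sum_range_succ (fun j => (k.factorial / j.factorial : ℝ) * L ^ j)]
  have h1 : ∀ i : ℕ, (k.factorial / (i+1).factorial : ℝ) * (((i:ℕ)+1) * L ^ i)
      = (k.factorial / i.factorial : ℝ) * L ^ i := by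
    intro i
    have h2 : ((i+1).factorial : ℝ) = ((i:ℝ)+1) * i.factorial := by
      push_cast [Nat.factorial_succ]; ring
    rw [h2]
    have hi : (i.factorial : ℝ) ≠ 0 := Nat.cast_ne_zero.2 i.factorial_ne_zero
    have hi1 : ((i:ℝ)+1) ≠ 0 := by positivity
    field_simp
  push_cast
  simp only [h1]
  rw [div_self (Nat.cast_ne_zero.2 k.factorial_ne_zero : (k.factorial:ℝ) ≠ 0)]
  ring

lemma aux_log_pow_le {k j : ℕ} (hjk : j ≤ k) {T : ℝ} (hT : 2 ≤ T) :
    Real.log T ^ j ≤ (1/Real.log 2)^k * Real.log T ^ k := by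
  have h2 : 0 < Real.log 2 := Real.log_pos (by norm_num)
  have hT2 : Real.log 2 ≤ Real.log T := Real.log_le_log (by norm_num) hT
  have hL : 0 < Real.log T := lt_of_lt_of_le h2 hT2
  have key : Real.log T ^ j * Real.log 2 ^ (k - j) ≤ Real.log T ^ k := by
    calc Real.log T ^ j * Real.log 2 ^ (k-j)
        ≤ Real.log T ^ j * Real.log T ^ (k-j) :=
          mul_le_mul_of_nonneg_left (pow_le_pow_left₀ h2.le hT2 _) (by positivity)
      _ = Real.log T ^ k := by rw [← pow_add]; congr 1; omega
  have e1 : Real.log T ^ j ≤ Real.log T ^ k / Real.log 2 ^ (k-j) :=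
    (le_div_iff₀ (by positivity)).2 key
  have h3 : Real.log 2 ^ k ≤ Real.log 2 ^ (k-j) :=
    pow_le_pow_of_le_one h2.le (le_trans Real.log_two_lt_d9.le (by norm_num)) (Nat.sub_le k j)
  calc Real.log T ^ j ≤ Real.log T ^ k / Real.log 2 ^ (k-j) := e1
    _ ≤ Real.log T ^ k / Real.log 2 ^ k := by
        apply div_le_div_of_nonneg_left (by positivity) (by positivity) h3
    _ = (1/Real.log 2)^k * Real.log T ^ k := by rw [one_div, inv_pow]; ring

lemma aux_tail (k : ℕ) : ∃ C > (0:ℝ), ∀ T : ℝ, 2 ≤ T →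
    IntegrableOn (fun t => Real.log t ^ k / t ^ 2) (Set.Ioi T) volume ∧
    ∫ t in Set.Ioi T, Real.log t ^ k / t ^ 2 ≤ C * Real.log T ^ k / T := by
  set φ : ℝ → ℝ :=
    fun t => (∑ j ∈ Finset.range (k+1), (k.factorial / j.factorial : ℝ) * Real.log t ^ j) / t
    with hφ
  have hderiv : ∀ t : ℝ, 0 < t → HasDerivAt (fun u => -φ u) (Real.log t ^ k / t ^ 2) t := by
    intro t ht
    have hS : HasDerivAt
        (fun u => ∑ j ∈ Finset.range (k+1), (k.factorial / j.factorial : ℝ) * Real.log u ^ j)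
        (∑ j ∈ Finset.range (k+1),
          (k.factorial / j.factorial : ℝ) * ((j:ℝ) * Real.log t ^ (j-1) * t⁻¹)) t :=
      HasDerivAt.fun_sum fun j _ =>
        ((Real.hasDerivAt_log ht.ne').pow j).const_mul ((k.factorial / j.factorial : ℝ))
    have hdiv : HasDerivAt φ
        (((∑ j ∈ Finset.range (k+1),
            (k.factorial / j.factorial : ℝ) * ((j:ℝ) * Real.log t ^ (j-1) * t⁻¹)) * t
          - (∑ j ∈ Finset.range (k+1), (k.factorial / j.factorial : ℝ) * Real.log t ^ j) * 1)
          / t ^ 2) t :=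
      hS.div (hasDerivAt_id t) ht.ne'
    refine hdiv.neg.congr_deriv ?_
    have e : (∑ j ∈ Finset.range (k+1),
          (k.factorial / j.factorial : ℝ) * ((j:ℝ) * Real.log t ^ (j-1) * t⁻¹))
        = (∑ j ∈ Finset.range (k+1),
          (k.factorial / j.factorial : ℝ) * ((j:ℝ) * Real.log t ^ (j-1))) * t⁻¹ := by
      rw [Finset.sum_mul]; exact Finset.sum_congr rfl fun j _ => by ring
    rw [e, aux_sum_id]
    generalize (∑ j ∈ Finset.range (k+1), (k.factorial / j.factorial : ℝ) * Real.log t ^ j) = Y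
    field_simp
    ring
  have htends : Tendsto (fun u => -φ u) atTop (nhds 0) := by
    have h1 : Tendsto φ atTop (nhds 0) := by
      have h2 : Tendsto (fun u : ℝ => ∑ j ∈ Finset.range (k+1),
          (k.factorial / j.factorial : ℝ) * (Real.log u ^ j / u)) atTop
          (nhds (∑ j ∈ Finset.range (k+1), (k.factorial / j.factorial : ℝ) * 0)) := by
        apply tendsto_finset_sum
        intro j _
        apply Tendsto.const_mul
        have := Real.tendsto_pow_log_div_mul_add_atTop 1 0 j one_ne_zero
        simpa using this
      have h3 : φ = fun u : ℝ => ∑ j ∈ Finset.range (k+1),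
          (k.factorial / j.factorial : ℝ) * (Real.log u ^ j / u) := by
        funext u
        show (∑ j ∈ Finset.range (k+1), (k.factorial / j.factorial : ℝ) * Real.log u ^ j) / u = _
        rw [Finset.sum_div]
        exact Finset.sum_congr rfl fun j _ => by ring
      rw [h3]
      simpa using h2
    simpa using h1.neg
  refine ⟨(∑ j ∈ Finset.range (k+1), (k.factorial / j.factorial : ℝ)) * (1/Real.log 2)^k + 1,
    by positivity, fun T hT => ?_⟩
  have hT0 : (0:ℝ) < T := lt_of_lt_of_le (by norm_num) hT
  have hcont : ContinuousWithinAt (fun u => -φ u) (Set.Ici T) T :=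
    ((hderiv T hT0).continuousAt).continuousWithinAt
  have hd : ∀ t ∈ Set.Ioi T, HasDerivAt (fun u => -φ u) (Real.log t ^ k / t ^ 2) t :=
    fun t htt => hderiv t (lt_trans hT0 htt)
  have hpos : ∀ t ∈ Set.Ioi T, 0 ≤ Real.log t ^ k / t ^ 2 := by
    intro t htt
    have h1 : (1:ℝ) ≤ t := le_trans (by norm_num) (le_trans hT (le_of_lt htt))
    have := Real.log_nonneg h1
    positivity
  refine ⟨integrableOn_Ioi_deriv_of_nonneg hcont hd hpos htends, ?_⟩
  rw [integral_Ioi_of_hasDerivAt_of_nonneg hcont hd hpos htends]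
  have hlog2 : 0 < Real.log 2 := Real.log_pos (by norm_num)
  have hlogT : 0 < Real.log T := lt_of_lt_of_le hlog2 (Real.log_le_log (by norm_num) hT)
  have hsum : (∑ j ∈ Finset.range (k+1), (k.factorial / j.factorial : ℝ) * Real.log T ^ j)
      ≤ (∑ j ∈ Finset.range (k+1), (k.factorial / j.factorial : ℝ)) * (1/Real.log 2)^k
        * Real.log T ^ k := by
    rw [Finset.sum_mul, Finset.sum_mul]
    apply Finset.sum_le_sum
    intro j hj
    rw [mul_assoc]
    exact mul_le_mul_of_nonneg_left
      (aux_log_pow_le (Nat.lt_succ_iff.mp (Finset.mem_range.mp hj)) hT) (by positivity)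
  calc 0 - -φ T
      = (∑ j ∈ Finset.range (k+1), (k.factorial / j.factorial : ℝ) * Real.log T ^ j) / T := by
        rw [zero_sub, neg_neg]
    _ ≤ ((∑ j ∈ Finset.range (k+1), (k.factorial / j.factorial : ℝ)) * (1/Real.log 2)^k
          * Real.log T ^ k) / T := (div_le_div_iff_of_pos_right hT0).2 hsum
    _ ≤ ((∑ j ∈ Finset.range (k+1), (k.factorial / j.factorial : ℝ)) * (1/Real.log 2)^k + 1)
          * Real.log T ^ k / T := by
        apply (div_le_div_iff_of_pos_right hT0).2
        apply mul_le_mul_of_nonneg_right _ (pow_nonneg hlogT.le k)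
        linarith


lemma aux_f_deriv (m : ℕ) {t : ℝ} (ht : 0 < t) : HasDerivAt (auxF m) (auxG m t) t := by
  unfold auxF auxG
  have h := ((Real.hasDerivAt_log ht.ne').pow m).div (hasDerivAt_id t) ht.ne'
  refine h.congr_deriv ?_
  field_simp
  simp only [id_eq, Pi.pow_apply]
  rw [div_eq_iff (pow_ne_zero 2 ht.ne')]
  ring

lemma aux_L_deriv {t : ℝ} (ht : 0 < t) :
    HasDerivAt auxL (1/(2*Real.pi) * Real.log (t/(2*Real.pi))) t := by
  unfold auxL
  have hπ : (0:ℝ) < 2*Real.pi := by positivity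
  have hu : HasDerivAt (fun u : ℝ => u/(2*Real.pi)) (1/(2*Real.pi)) t := by
    simpa using (hasDerivAt_id t).div_const (2*Real.pi)
  have hne : t/(2*Real.pi) ≠ 0 := by positivity
  have hlog : HasDerivAt (fun u : ℝ => Real.log (u/(2*Real.pi)))
      ((1/(2*Real.pi))/(t/(2*Real.pi))) t := hu.log hne
  have h2 := ((hu.mul hlog).const_add (7/8 : ℝ)).sub hu
  refine h2.congr_deriv ?_
  have hπ' : Real.pi ≠ 0 := Real.pi_ne_zero
  field_simp
  ring

lemma aux_A_deriv (m : ℕ) {t : ℝ} (ht : 0 < t) :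
    HasDerivAt (ACoeff m)
      ((1/(2*Real.pi) * Real.log (t/(2*Real.pi))) * (Real.log t ^ m / t)) t := by
  have hπ : (0:ℝ) < 2*Real.pi := by positivity
  set c0 : ℝ := 1/(2*Real.pi*(m+1)*(m+2)) with hc0
  have hEq : (fun u => c0 * Real.log u ^ (m+1)
      * (((m:ℝ)+1) * Real.log u - ((m:ℝ)+2) * Real.log (2*Real.pi))) =ᶠ[nhds t] ACoeff m := by
    filter_upwards [IsOpen.mem_nhds isOpen_Ioi ht] with u hu
    have hu0 : (0:ℝ) < u := hu
    unfold ACoeff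
    rw [Real.log_div (pow_ne_zero _ hu0.ne') (by positivity), Real.log_pow, Real.log_pow]
    push_cast
    ring
  have hlog := Real.hasDerivAt_log ht.ne'
  have h1 : HasDerivAt (fun u => c0 * Real.log u ^ (m+1)
      * (((m:ℝ)+1) * Real.log u - ((m:ℝ)+2) * Real.log (2*Real.pi)))
      ((c0 * (((m+1:ℕ):ℝ) * Real.log t ^ (m+1-1) * t⁻¹))
        * (((m:ℝ)+1) * Real.log t - ((m:ℝ)+2) * Real.log (2*Real.pi))
       + (c0 * Real.log t ^ (m+1)) * (((m:ℝ)+1) * t⁻¹)) t :=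
    ((hlog.pow (m+1)).const_mul c0).mul
      (((hlog.const_mul ((m:ℝ)+1)).sub_const (((m:ℝ)+2) * Real.log (2*Real.pi))))
  have h2 := h1.congr_of_eventuallyEq hEq.symm
  refine h2.congr_deriv ?_
  have hπ' : Real.pi ≠ 0 := Real.pi_ne_zero
  have hm1 : ((m:ℝ)+1) ≠ 0 := by positivity
  have hm2 : ((m:ℝ)+2) ≠ 0 := by positivity
  rw [Real.log_div ht.ne' hπ.ne']
  rw [hc0]
  push_cast
  field_simp
  ring

lemma aux_B_deriv (m : ℕ) {t : ℝ} (ht : 0 < t) :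
    HasDerivAt (auxB m) (auxL t * auxG m t) t := by
  unfold auxB
  have h1 := ((aux_L_deriv ht).mul (aux_f_deriv m ht)).sub (aux_A_deriv m ht)
  refine h1.congr_deriv ?_
  unfold auxF auxG auxL
  ring


theorem sum_sub_ACoeff_tendsto (x : ℕ → ℝ) (hmono : Monotone x) (hx0 : 1 < x 0)
    (hlim : Filter.Tendsto x Filter.atTop Filter.atTop)
    (N : ℝ → ℕ) (hN : ∀ T : ℝ, N T = Nat.card {n : ℕ // x n < T})
    (L : ℝ → ℝ)
    (hL : ∀ T : ℝ, L T = 7 / 8 + T / (2 * Real.pi) * Real.log (T / (2 * Real.pi))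
      - T / (2 * Real.pi))
    (Q : ℝ → ℝ) (hQ : ∀ T : ℝ, Q T = (N T : ℝ) - L T)
    (hQbound : ∃ K > (0 : ℝ), ∀ T ≥ (2 : ℝ), |Q T| ≤ K * Real.log T)
    (m : ℕ) :
    ∃ c : ℝ, ∃ K' > (0 : ℝ),
      (∀ T ≥ (2 : ℝ), T ∉ Set.range x →
        |(∑' n : ℕ, if x n < T then Real.log (x n) ^ m / x n else 0) - ACoeff m T - c|
          ≤ K' * Real.log T ^ (m + 1) / T) ∧
      Filter.Tendsto (fun T : ℝ =>
          (∑' n : ℕ, if x n < T then Real.log (x n) ^ m / x n else 0) - ACoeff m T)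
        Filter.atTop (nhds c) := by
  obtain ⟨K, hK, hKb⟩ := hQbound
  obtain ⟨C, hC, hCtail⟩ := aux_tail (m + 1)
  set a : ℝ := x 0 with ha
  have ha1 : 1 < a := hx0
  have ha0 : (0 : ℝ) < a := lt_trans one_pos ha1
  set S : ℝ → ℝ := fun T => ∑' n : ℕ, if x n < T then Real.log (x n) ^ m / x n else 0 with hS
  set Qg : ℝ → ℝ := fun t => Q t * auxG m t with hQg
  have hxa : ∀ n, a ≤ x n := fun n => hmono (Nat.zero_le n)
  have hxpos : ∀ n, 0 < x n := fun n => lt_of_lt_of_le ha0 (hxa n)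
  have hlog2 : 0 < Real.log 2 := Real.log_pos (by norm_num)
  -- finiteness of counting sets
  have hfin : ∀ T : ℝ, {n : ℕ | x n < T}.Finite := by
    intro T
    obtain ⟨M, hM⟩ := Filter.eventually_atTop.mp (hlim.eventually (eventually_ge_atTop T))
    apply Set.Finite.subset (Set.finite_Iio M)
    intro n hn
    simp only [Set.mem_Iio]
    by_contra h
    exact absurd (hM n (le_of_not_gt h)) (not_le.2 hn)
  have hNs : ∀ T, N T = ((hfin T).toFinset).card := by
    intro T
    rw [hN T]
    calc Nat.card {n : ℕ // x n < T} = Nat.card ↥{n : ℕ | x n < T} := rfl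
      _ = ({n : ℕ | x n < T}).ncard := Nat.card_coe_set_eq _
      _ = (hfin T).toFinset.card := Set.ncard_eq_toFinset_card _ (hfin T)
  have hNmono : Monotone (fun t : ℝ => (N t : ℝ)) := by
    intro u v huv
    simp only
    have hsub : (hfin u).toFinset ⊆ (hfin v).toFinset := by
      intro n hn
      rw [Set.Finite.mem_toFinset] at *
      exact lt_of_lt_of_le hn huv
    rw [hNs u, hNs v]
    exact_mod_cast Finset.card_le_card hsub
  have hNmeas : Measurable (fun t : ℝ => (N t : ℝ)) := hNmono.measurable
  have hNmono' : ∀ u v : ℝ, u ≤ v → N u ≤ N v := by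
    intro u v huv
    have h := hNmono huv
    simp only at h
    exact_mod_cast h
  have hNzero : ∀ t : ℝ, t ≤ a → N t = 0 := by
    intro t ht
    rw [hN t]
    have : IsEmpty {n : ℕ // x n < t} :=
      ⟨fun ⟨n, hn⟩ => absurd hn (not_lt.2 (le_trans ht (hxa n)))⟩
    exact Nat.card_of_isEmpty
  have hQeq : ∀ t, Q t = (N t : ℝ) - auxL t := by
    intro t
    rw [hQ t, hL t]
    rfl
  -- continuity and measurability
  have hgcont : ∀ t : ℝ, t ≠ 0 → ContinuousAt (auxG m) t := by
    intro t ht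
    have hl : ContinuousAt Real.log t := Real.continuousAt_log ht
    exact (((hl.pow (m-1)).const_mul (m:ℝ)).sub (hl.pow m)).div
      (continuousAt_id.pow 2) (pow_ne_zero 2 ht)
  have hLccont : ∀ t : ℝ, 0 < t → ContinuousAt auxL t := fun t ht => (aux_L_deriv ht).continuousAt
  have hgmeas : Measurable (auxG m) := by
    unfold auxG
    exact (((Real.measurable_log.pow_const (m-1)).const_mul (m:ℝ)).sub
      (Real.measurable_log.pow_const m)).div (measurable_id.pow_const 2)
  have hLcmeas : Measurable auxL := by
    unfold auxL
    exact ((measurable_const.add ((measurable_id.div_const _).mul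
      (Real.measurable_log.comp (measurable_id.div_const _)))).sub (measurable_id.div_const _))
  have hQmeas : Measurable Q := by
    have he : Q = fun t => (N t : ℝ) - auxL t := funext hQeq
    rw [he]
    exact hNmeas.sub hLcmeas
  have hQgmeas : Measurable Qg := hQmeas.mul hgmeas
  -- integrability of g and L·g on compact-type sets
  have hgIoc : ∀ u v : ℝ, 0 < u → IntegrableOn (auxG m) (Set.Ioc u v) := by
    intro u v hu
    apply (ContinuousOn.integrableOn_Icc ?_).mono_set Set.Ioc_subset_Icc_self
    intro t htt
    exact (hgcont t (ne_of_gt (lt_of_lt_of_le hu htt.1))).continuousWithinAt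
  have hLgIoc : ∀ u v : ℝ, 0 < u → IntegrableOn (fun t => auxL t * auxG m t) (Set.Ioc u v) := by
    intro u v hu
    apply (ContinuousOn.integrableOn_Icc ?_).mono_set Set.Ioc_subset_Icc_self
    intro t htt
    have ht0 : 0 < t := lt_of_lt_of_le hu htt.1
    exact ((hLccont t ht0).mul (hgcont t ht0.ne')).continuousWithinAt
  have hgIntble : ∀ u v : ℝ, 0 < u → 0 < v → IntervalIntegrable (auxG m) volume u v := by
    intro u v hu hv
    apply ContinuousOn.intervalIntegrable
    intro t htt
    have ht0 : 0 < t := lt_of_lt_of_le (lt_min hu hv) htt.1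
    exact (hgcont t ht0.ne').continuousWithinAt
  have hLgIntble : ∀ u v : ℝ, 0 < u → 0 < v →
      IntervalIntegrable (fun t => auxL t * auxG m t) volume u v := by
    intro u v hu hv
    apply ContinuousOn.intervalIntegrable
    intro t htt
    have ht0 : 0 < t := lt_of_lt_of_le (lt_min hu hv) htt.1
    exact ((hLccont t ht0).mul (hgcont t ht0.ne')).continuousWithinAt
  -- FTC for f
  have hfFTC : ∀ u v : ℝ, 0 < u → u ≤ v →
      (∫ t in Set.Ioc u v, auxG m t) = auxF m v - auxF m u := by
    intro u v hu huv
    have hder : ∀ t ∈ Set.uIcc u v, HasDerivAt (auxF m) (auxG m t) t := by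
      intro t htt
      rw [Set.uIcc_of_le huv] at htt
      exact aux_f_deriv m (lt_of_lt_of_le hu htt.1)
    have h0 := intervalIntegral.integral_eq_sub_of_hasDerivAt hder
      (hgIntble u v hu (lt_of_lt_of_le hu huv))
    rw [intervalIntegral.integral_of_le huv] at h0
    exact h0
  -- FTC for B
  have hBftc : ∀ u v : ℝ, 0 < u → 0 < v →
      (∫ t in u..v, auxL t * auxG m t) = auxB m v - auxB m u := by
    intro u v hu hv
    exact intervalIntegral.integral_eq_sub_of_hasDerivAt
      (fun t htt => aux_B_deriv m (lt_of_lt_of_le (lt_min hu hv) htt.1))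
      (hLgIntble u v hu hv)
  -- key identity
  have key : ∀ T : ℝ, 2 ≤ T →
      S T = (N T : ℝ) * auxF m T - ∫ t in Set.Ioc a T, (N t : ℝ) * auxG m t := by
    intro T hT2
    have hT0 : (0:ℝ) < T := by linarith
    rcases le_or_gt a T with haT | haT
    · set s : Finset ℕ := (hfin T).toFinset with hs
      have hmem : ∀ n, n ∈ s ↔ x n < T := fun n => (hfin T).mem_toFinset
      have hcard : (N T : ℝ) = (s.card : ℝ) := by rw [hNs T]
      have hSsum : S T = ∑ n ∈ s, auxF m (x n) := by
        rw [hS]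
        simp only
        rw [tsum_eq_sum (s := s) (fun n hn => if_neg (fun h => hn ((hmem n).2 h)))]
        exact Finset.sum_congr rfl fun n hn => if_pos ((hmem n).1 hn)
      have hterm : ∀ n ∈ s, auxF m (x n)
          = auxF m T - (∫ t in Set.Ioc a T, auxG m t)
            + ∫ t in Set.Ioc a T, (Set.Iic (x n)).indicator (auxG m) t := by
        intro n hn
        have hlt : x n < T := (hmem n).1 hn
        have h1 : (∫ t in Set.Ioc (x n) T, auxG m t) = auxF m T - auxF m (x n) :=
          hfFTC (x n) T (hxpos n) hlt.le
        have h2 : (∫ t in Set.Ioc a T, auxG m t)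
            = (∫ t in Set.Ioc a (x n), auxG m t) + ∫ t in Set.Ioc (x n) T, auxG m t := by
          rw [← setIntegral_union (Set.Ioc_disjoint_Ioc_of_le le_rfl) measurableSet_Ioc
            (hgIoc a (x n) ha0) (hgIoc (x n) T (hxpos n))]
          rw [Set.Ioc_union_Ioc_eq_Ioc (hxa n) hlt.le]
        have h3 : (∫ t in Set.Ioc a T, (Set.Iic (x n)).indicator (auxG m) t)
            = ∫ t in Set.Ioc a (x n), auxG m t := by
          rw [setIntegral_indicator measurableSet_Iic]
          congr 1
          rw [Set.Ioc_inter_Iic, min_eq_right hlt.le]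
        rw [h3]
        linarith
      have hindint : ∀ n ∈ s, Integrable (fun t => (Set.Iic (x n)).indicator (auxG m) t)
          (volume.restrict (Set.Ioc a T)) := by
        intro n hn
        exact (hgIoc a T ha0).indicator measurableSet_Iic
      have hsum2 : S T = (s.card : ℝ) * auxF m T - (s.card : ℝ) * (∫ t in Set.Ioc a T, auxG m t)
          + ∑ n ∈ s, ∫ t in Set.Ioc a T, (Set.Iic (x n)).indicator (auxG m) t := by
        rw [hSsum, Finset.sum_congr rfl hterm, Finset.sum_add_distrib, Finset.sum_const,
          nsmul_eq_mul]
        ring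
      have hsum3 : (∑ n ∈ s, ∫ t in Set.Ioc a T, (Set.Iic (x n)).indicator (auxG m) t)
          = ∫ t in Set.Ioc a T, ∑ n ∈ s, (Set.Iic (x n)).indicator (auxG m) t :=
        (integral_finset_sum s hindint).symm
      have hptw : ∀ t ∈ Set.Ioc a T, (∑ n ∈ s, (Set.Iic (x n)).indicator (auxG m) t)
          = ((s.card : ℝ) - (N t : ℝ)) * auxG m t := by
        intro t htt
        have e1 : (∑ n ∈ s, (Set.Iic (x n)).indicator (auxG m) t)
            = ((s.filter fun n => t ≤ x n).card : ℝ) * auxG m t := by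
          simp only [Set.indicator_apply, Set.mem_Iic]
          rw [← Finset.sum_filter, Finset.sum_const, nsmul_eq_mul]
        have e2 : (s.filter fun n => x n < t).card = N t := by
          rw [hNs t]
          congr 1
          ext n
          simp only [Finset.mem_filter, Set.Finite.mem_toFinset, Set.mem_setOf_eq]
          constructor
          · exact fun h => h.2
          · exact fun h => ⟨(hmem n).2 (lt_of_lt_of_le h htt.2), h⟩
        have e3 : (s.filter fun n => t ≤ x n).card + (s.filter fun n => x n < t).card
            = s.card := by
          simpa [not_le] using
            Finset.card_filter_add_card_filter_not (s := s) (p := fun n => t ≤ x n)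
        rw [e1]
        congr 1
        have e4 : (s.filter fun n => t ≤ x n).card = s.card - N t := by omega
        rw [e4, Nat.cast_sub (by omega : N t ≤ s.card)]
      have hNg : IntegrableOn (fun t => (N t : ℝ) * auxG m t) (Set.Ioc a T) := by
        apply Integrable.mono' ((hgIoc a T ha0).norm.const_mul ((N T : ℝ)))
          ((hNmeas.mul hgmeas).aestronglyMeasurable)
        rw [ae_restrict_iff' measurableSet_Ioc]
        apply Filter.Eventually.of_forall
        intro t htt
        rw [Pi.mul_apply, norm_mul]
        apply mul_le_mul_of_nonneg_right ?_ (norm_nonneg _)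
        rw [Real.norm_natCast]
        exact_mod_cast hNmono' t T htt.2
      rw [hsum2, hsum3, setIntegral_congr_fun measurableSet_Ioc hptw]
      have hsub : (∫ t in Set.Ioc a T, ((s.card : ℝ) - (N t : ℝ)) * auxG m t)
          = (s.card : ℝ) * (∫ t in Set.Ioc a T, auxG m t)
            - ∫ t in Set.Ioc a T, (N t : ℝ) * auxG m t := by
        have he : ∀ t ∈ Set.Ioc a T, ((s.card : ℝ) - (N t : ℝ)) * auxG m t
            = (s.card : ℝ) * auxG m t - (N t : ℝ) * auxG m t := fun t _ => by ring
        rw [setIntegral_congr_fun measurableSet_Ioc he,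
          integral_sub ((hgIoc a T ha0).const_mul _) hNg, integral_const_mul]
      rw [hsub, hcard]
      ring
    · have hN0 : N T = 0 := hNzero T haT.le
      have hempty : Set.Ioc a T = ∅ := Set.Ioc_eq_empty (not_lt.2 haT.le)
      have hS0 : S T = 0 := by
        rw [hS]
        simp only
        convert tsum_zero with n
        exact if_neg (not_lt.2 (le_of_lt (lt_of_lt_of_le haT (hxa n))))
      rw [hS0, hN0, hempty]
      simp
  -- pointwise bound for Qg on [2,∞)
  have hQabs : ∀ t : ℝ, 2 ≤ t →
      ‖Qg t‖ ≤ (K * ((m:ℝ)/Real.log 2 + 1)) * (Real.log t ^ (m+1) / t ^ 2) := by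
    intro t ht
    have hlogt : Real.log 2 ≤ Real.log t := Real.log_le_log (by norm_num) ht
    have hlt0 : 0 < Real.log t := lt_of_lt_of_le hlog2 hlogt
    have ht0 : (0:ℝ) < t := by linarith
    have h1 : |Q t| ≤ K * Real.log t := hKb t ht
    have h2 : |auxG m t| ≤ ((m:ℝ) * Real.log t ^ (m-1) + Real.log t ^ m) / t ^ 2 := by
      unfold auxG
      rw [abs_div, abs_of_pos (by positivity : (0:ℝ) < t^2)]
      apply div_le_div_of_nonneg_right ?_ (by positivity)
      calc |(m:ℝ) * Real.log t ^ (m-1) - Real.log t ^ m|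
          ≤ |(m:ℝ) * Real.log t ^ (m-1)| + |Real.log t ^ m| := abs_sub _ _
        _ = (m:ℝ) * Real.log t ^ (m-1) + Real.log t ^ m := by
            rw [abs_of_nonneg (by positivity), abs_of_nonneg (by positivity)]
    have hP : Real.log t * ((m:ℝ) * Real.log t ^ (m-1) + Real.log t ^ m)
        ≤ ((m:ℝ)/Real.log 2 + 1) * Real.log t ^ (m+1) := by
      rcases Nat.eq_zero_or_pos m with h0 | h0
      · subst h0
        norm_num
      · have e : Real.log t ^ (m-1) * Real.log t = Real.log t ^ m := by
          rw [← pow_succ]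
          congr 1
          omega
        have e2 : Real.log t ^ m * Real.log t = Real.log t ^ (m+1) := by rw [← pow_succ]
        have h4 : Real.log t ^ m * Real.log 2 ≤ Real.log t ^ (m+1) := by
          rw [← e2]
          exact mul_le_mul_of_nonneg_left hlogt (by positivity)
        have h5 := mul_le_mul_of_nonneg_left h4
          (show (0:ℝ) ≤ (m:ℝ)/Real.log 2 by positivity)
        have h6 : (m:ℝ)/Real.log 2 * (Real.log t ^ m * Real.log 2)
            = (m:ℝ) * Real.log t ^ m := by field_simp
        rw [h6] at h5
        calc Real.log t * ((m:ℝ) * Real.log t ^ (m-1) + Real.log t ^ m)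
            = (m:ℝ) * (Real.log t ^ (m-1) * Real.log t) + Real.log t ^ m * Real.log t := by ring
          _ = (m:ℝ) * Real.log t ^ m + Real.log t ^ (m+1) := by rw [e, e2]
          _ ≤ (m:ℝ)/Real.log 2 * Real.log t ^ (m+1) + Real.log t ^ (m+1) := by linarith
          _ = ((m:ℝ)/Real.log 2 + 1) * Real.log t ^ (m+1) := by ring
    have hQgt : ‖Qg t‖ = |Q t| * |auxG m t| := by
      rw [hQg]
      simp only
      rw [Real.norm_eq_abs, abs_mul]
    rw [hQgt]
    calc |Q t| * |auxG m t|
        ≤ (K * Real.log t) * (((m:ℝ) * Real.log t ^ (m-1) + Real.log t ^ m) / t^2) :=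
          mul_le_mul h1 h2 (abs_nonneg _) (by positivity)
      _ = K * (Real.log t * ((m:ℝ) * Real.log t ^ (m-1) + Real.log t ^ m)) / t^2 := by ring
      _ ≤ K * (((m:ℝ)/Real.log 2 + 1) * Real.log t ^ (m+1)) / t^2 := by
          apply div_le_div_of_nonneg_right ?_ (by positivity)
          exact mul_le_mul_of_nonneg_left hP hK.le
      _ = (K * ((m:ℝ)/Real.log 2 + 1)) * (Real.log t ^ (m+1) / t ^ 2) := by ring
  -- tail integrability and bound
  have hQgIoi : ∀ T : ℝ, 2 ≤ T → IntegrableOn Qg (Set.Ioi T) := by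
    intro T hT
    apply Integrable.mono' ((hCtail T hT).1.const_mul (K * ((m:ℝ)/Real.log 2 + 1)))
      hQgmeas.aestronglyMeasurable
    rw [ae_restrict_iff' measurableSet_Ioi]
    exact Filter.Eventually.of_forall fun t htt => hQabs t (le_trans hT htt.le)
  have hQgIoiBound : ∀ T : ℝ, 2 ≤ T →
      |∫ t in Set.Ioi T, Qg t|
        ≤ (K * ((m:ℝ)/Real.log 2 + 1)) * C * (Real.log T ^ (m+1) / T) := by
    intro T hT
    have h1 : |∫ t in Set.Ioi T, Qg t| ≤ ∫ t in Set.Ioi T, ‖Qg t‖ := by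
      rw [← Real.norm_eq_abs]
      exact norm_integral_le_integral_norm _
    have h2 : (∫ t in Set.Ioi T, ‖Qg t‖)
        ≤ ∫ t in Set.Ioi T, (K * ((m:ℝ)/Real.log 2 + 1)) * (Real.log t ^ (m+1)/t^2) := by
      apply setIntegral_mono_on ((hQgIoi T hT).norm)
        ((hCtail T hT).1.const_mul _) measurableSet_Ioi
      intro t htt
      exact hQabs t (le_trans hT htt.le)
    calc |∫ t in Set.Ioi T, Qg t| ≤ ∫ t in Set.Ioi T, ‖Qg t‖ := h1
      _ ≤ ∫ t in Set.Ioi T, (K * ((m:ℝ)/Real.log 2 + 1)) * (Real.log t ^ (m+1)/t^2) := h2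
      _ = (K * ((m:ℝ)/Real.log 2 + 1)) * ∫ t in Set.Ioi T, Real.log t ^ (m+1)/t^2 :=
          integral_const_mul _ _
      _ ≤ (K * ((m:ℝ)/Real.log 2 + 1)) * (C * Real.log T ^ (m+1) / T) :=
          mul_le_mul_of_nonneg_left (hCtail T hT).2 (by positivity)
      _ = (K * ((m:ℝ)/Real.log 2 + 1)) * C * (Real.log T ^ (m+1) / T) := by ring
  -- integrability of Qg on bounded intervals
  have hQgIoc : ∀ u v : ℝ, 0 < u → IntegrableOn Qg (Set.Ioc u v) := by
    intro u v hu
    apply Integrable.mono'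
      (((hgIoc u v hu).norm.const_mul ((N v : ℝ))).add ((hLgIoc u v hu).norm))
      hQgmeas.aestronglyMeasurable
    rw [ae_restrict_iff' measurableSet_Ioc]
    apply Filter.Eventually.of_forall
    intro t htt
    have hQt : Q t = (N t : ℝ) - auxL t := hQeq t
    have hb1 : ‖Qg t‖ ≤ ((N t : ℝ) + ‖auxL t‖) * ‖auxG m t‖ := by
      rw [hQg]
      simp only
      rw [norm_mul, hQt]
      apply mul_le_mul_of_nonneg_right ?_ (norm_nonneg _)
      calc ‖(N t:ℝ) - auxL t‖ ≤ ‖(N t:ℝ)‖ + ‖auxL t‖ := norm_sub_le _ _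
        _ = (N t:ℝ) + ‖auxL t‖ := by rw [Real.norm_natCast]
    calc ‖Qg t‖ ≤ ((N t : ℝ) + ‖auxL t‖) * ‖auxG m t‖ := hb1
      _ ≤ ((N v : ℝ) + ‖auxL t‖) * ‖auxG m t‖ := by
          apply mul_le_mul_of_nonneg_right ?_ (norm_nonneg _)
          have h7 : (N t : ℝ) ≤ (N v : ℝ) := by exact_mod_cast hNmono' t v htt.2
          linarith
      _ = (N v:ℝ) * ‖auxG m t‖ + ‖auxL t * auxG m t‖ := by rw [norm_mul]; ring
  have hQgIoia : IntegrableOn Qg (Set.Ioi a) := by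
    rw [← Set.Ioc_union_Ioi_eq_Ioi (le_max_left a 2)]
    exact (hQgIoc a (max a 2) ha0).union (hQgIoi (max a 2) (le_max_right a 2))
  set I : ℝ := ∫ t in Set.Ioi a, Qg t with hI
  have hIsplit : ∀ T : ℝ, a ≤ T → 2 ≤ T →
      I = (∫ t in Set.Ioc a T, Qg t) + ∫ t in Set.Ioi T, Qg t := by
    intro T haT hT2
    rw [hI, ← Set.Ioc_union_Ioi_eq_Ioi haT,
      setIntegral_union (Set.Ioc_disjoint_Ioi le_rfl) measurableSet_Ioi
        (hQgIoc a T ha0) (hQgIoi T hT2)]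
  -- master equation
  have master : ∀ T : ℝ, 2 ≤ T →
      S T - ACoeff m T - (auxB m a - I) = Q T * auxF m T + ∫ t in Set.Ioi T, Qg t := by
    intro T hT2
    have hT0 : (0:ℝ) < T := by linarith
    have hQT : Q T = (N T : ℝ) - auxL T := hQeq T
    have hBTe : auxB m T = auxL T * auxF m T - ACoeff m T := rfl
    have hBae : auxB m a = auxL a * auxF m a - ACoeff m a := rfl
    rcases le_or_gt a T with haT | haT
    · have h1 := key T hT2
      have h2 : (∫ t in Set.Ioc a T, (N t:ℝ) * auxG m t)
          = (∫ t in Set.Ioc a T, auxL t * auxG m t) + ∫ t in Set.Ioc a T, Qg t := by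
        rw [← integral_add (hLgIoc a T ha0) (hQgIoc a T ha0)]
        apply setIntegral_congr_fun measurableSet_Ioc
        intro t htt
        rw [hQg]
        simp only
        rw [hQeq t]
        ring
      have h3 : (∫ t in Set.Ioc a T, auxL t * auxG m t) = auxB m T - auxB m a := by
        rw [← intervalIntegral.integral_of_le haT]
        exact hBftc a T ha0 hT0
      have h4 := hIsplit T haT hT2
      rw [hQT]
      linear_combination h1 - h2 - h3 + h4 - hBTe
    · have hNT : (N T : ℝ) = 0 := by rw [hNzero T haT.le]; norm_num
      have h5 : (∫ t in Set.Ioi T, Qg t) = (∫ t in Set.Ioc T a, Qg t) + I := by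
        rw [hI, ← Set.Ioc_union_Ioi_eq_Ioi haT.le,
          setIntegral_union (Set.Ioc_disjoint_Ioi le_rfl) measurableSet_Ioi
            (hQgIoc T a hT0) hQgIoia]
      have h6 : (∫ t in Set.Ioc T a, Qg t) = -(auxB m a - auxB m T) := by
        have he : ∀ t ∈ Set.Ioc T a, Qg t = -(auxL t * auxG m t) := by
          intro t htt
          rw [hQg]
          simp only
          rw [hQeq t, hNzero t htt.2]
          push_cast
          ring
        rw [setIntegral_congr_fun measurableSet_Ioc he, integral_neg,
          ← intervalIntegral.integral_of_le haT.le, hBftc T a hT0 ha0]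
      have h1 := key T hT2
      have hempty : Set.Ioc a T = ∅ := Set.Ioc_eq_empty (not_lt.2 haT.le)
      rw [hempty] at h1
      simp only [Measure.restrict_empty, integral_zero_measure, sub_zero] at h1
      rw [hQT]
      linear_combination h1 - h5 - h6 - hBTe
  -- final bound
  have hbound : ∀ T : ℝ, 2 ≤ T →
      |S T - ACoeff m T - (auxB m a - I)|
        ≤ (K + (K * ((m:ℝ)/Real.log 2 + 1)) * C) * Real.log T ^ (m+1) / T := by
    intro T hT2
    have hT0 : (0:ℝ) < T := by linarith
    have hlogT : 0 ≤ Real.log T := Real.log_nonneg (by linarith)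
    rw [master T hT2]
    have h1 : |Q T * auxF m T| ≤ K * Real.log T ^ (m+1) / T := by
      rw [abs_mul]
      have hfT : |auxF m T| = Real.log T ^ m / T := by
        unfold auxF
        rw [abs_of_nonneg (by positivity)]
      rw [hfT]
      calc |Q T| * (Real.log T ^ m / T) ≤ (K * Real.log T) * (Real.log T ^ m / T) :=
          mul_le_mul_of_nonneg_right (hKb T hT2) (by positivity)
        _ = K * Real.log T ^ (m+1) / T := by rw [pow_succ]; ring
    have h2 := hQgIoiBound T hT2
    calc |Q T * auxF m T + ∫ t in Set.Ioi T, Qg t|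
        ≤ |Q T * auxF m T| + |∫ t in Set.Ioi T, Qg t| := abs_add_le _ _
      _ ≤ K * Real.log T ^ (m+1) / T
          + (K * ((m:ℝ)/Real.log 2 + 1)) * C * (Real.log T ^ (m+1) / T) := add_le_add h1 h2
      _ = (K + (K * ((m:ℝ)/Real.log 2 + 1)) * C) * Real.log T ^ (m+1) / T := by ring
  have hK' : 0 < K + (K * ((m:ℝ)/Real.log 2 + 1)) * C := by
    have hm0 : (0:ℝ) ≤ (m:ℝ)/Real.log 2 := div_nonneg (Nat.cast_nonneg m) hlog2.le
    have : 0 < K * ((m:ℝ)/Real.log 2 + 1) := mul_pos hK (by linarith)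
    nlinarith
  refine ⟨auxB m a - I, K + (K * ((m:ℝ)/Real.log 2 + 1)) * C, hK', ?_, ?_⟩
  · intro T hT2 _
    exact hbound T hT2
  · have h0 : Tendsto (fun T : ℝ => (K + (K * ((m:ℝ)/Real.log 2 + 1)) * C)
        * (Real.log T ^ (m+1) / T)) atTop (nhds 0) := by
      have h00 := (Real.tendsto_pow_log_div_mul_add_atTop 1 0 (m+1) one_ne_zero).const_mul
        (K + (K * ((m:ℝ)/Real.log 2 + 1)) * C)
      simpa using h00
    have h1 : Tendsto (fun T : ℝ => S T - ACoeff m T - (auxB m a - I)) atTop (nhds 0) := by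
      apply squeeze_zero_norm' ?_ h0
      filter_upwards [eventually_ge_atTop (2:ℝ)] with T hT
      rw [Real.norm_eq_abs]
      calc |S T - ACoeff m T - (auxB m a - I)|
          ≤ (K + (K * ((m:ℝ)/Real.log 2 + 1)) * C) * Real.log T ^ (m+1) / T := hbound T hT
        _ = (K + (K * ((m:ℝ)/Real.log 2 + 1)) * C) * (Real.log T ^ (m+1) / T) := by ring
    have h2 := h1.add_const (auxB m a - I)
    simp only [sub_add_cancel, zero_add] at h2
    exact h2
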